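/- arXiv:1704.06640 — 5 statements merged into one kernel-verified Lean document; each statement's English description precedes it below -/
import Mathlib

section
/- Let g_sr, g_rr, g_rd, g_sd be mutually independent exponential random variables with means π_sr, π_rr, π_rd, π_sd > 0, respectively. Fix P_s, P_r > 0, r > 0 and set η = 2^r − 1. Then the end-to-end outage probability under proper Gaussian signaling satisfies P[ {(P_s·g_sr + P_r·g_rr + 1)² < 2^{2r}·(P_r·g_rr + 1)²} ∪ {(P_r·g_rd + P_s·g_sd + 1)² < 2^{2r}·(P_s·g_sd + 1)²} ] = 1 − P_s·P_r·π_sr·π_rd · e^{−η·(1/(P_s·π_sr) + 1/(P_r·π_rd))} / ( (P_s·π_sr + P_r·π_rr·η) · (P_r·π_rd + P_s·π_sd·η) ). -/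
open MeasureTheory ProbabilityTheory Real

/-- The exponential law with mean `mean`, given by its density `(1/mean) e^(-x/mean)` on `[0, ∞)`. -/
noncomputable def expLaw (mean : ℝ) : Measure ℝ :=
  volume.withDensity fun x =>
    ENNReal.ofReal (if 0 ≤ x then (1 / mean) * Real.exp (-x / mean) else 0)

open Set

lemma expLaw_eq (m : ℝ) : expLaw m = expMeasure m⁻¹ := by
  unfold expLaw expMeasure gammaMeasure
  refine congrArg _ (funext fun x => ?_)
  rw [show gammaPDF 1 m⁻¹ x = exponentialPDF m⁻¹ x from rfl, exponentialPDF_eq]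
  congr 1
  split_ifs with h
  · rw [one_div, show -x / m = -(m⁻¹ * x) by ring]
  · rfl


lemma expMeasure_Iio_zero {r : ℝ} : expMeasure r (Iio 0) = 0 := by
  rw [expMeasure, gammaMeasure, withDensity_apply _ measurableSet_Iio]
  exact lintegral_exponentialPDF_of_nonpos le_rfl

lemma expMeasure_Ici {r c : ℝ} (hr : 0 < r) (hc : 0 ≤ c) :
    expMeasure r (Ici c) = ENNReal.ofReal (Real.exp (-(r * c))) := by
  haveI := isProbabilityMeasure_expMeasure hr
  have hac : expMeasure r ≪ volume := by
    rw [expMeasure, gammaMeasure]; exact withDensity_absolutelyContinuous _ _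
  haveI : NullSingletonClass (expMeasure r) := ⟨fun x => hac (measure_singleton x)⟩
  have hIic : expMeasure r (Iic c) = ENNReal.ofReal (1 - Real.exp (-(r * c))) := by
    rw [expMeasure, gammaMeasure, withDensity_apply _ measurableSet_Iic]
    rw [show (gammaPDF 1 r) = exponentialPDF r from rfl,
      lintegral_exponentialPDF_eq_antiDeriv hr c, if_pos hc]
  have hIio : expMeasure r (Iio c) = ENNReal.ofReal (1 - Real.exp (-(r * c))) := by
    rw [measure_congr (Iio_ae_eq_Iic (a := c)), hIic]
  have hcompl := measure_compl (measurableSet_Iio (a := c)) (measure_ne_top (expMeasure r) _)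
  rw [compl_Iio] at hcompl
  rw [hcompl, hIio, measure_univ]
  have he1 : Real.exp (-(r * c)) ≤ 1 := exp_le_one_iff.2 (neg_nonpos.2 (mul_nonneg hr.le hc))
  rw [show (1 : ENNReal) = ENNReal.ofReal 1 by simp,
    ← ENNReal.ofReal_sub _ (by linarith [Real.exp_pos (-(r * c))])]
  congr 1; ring

lemma expLaw_ae_nonneg {b : ℝ} : ∀ᵐ y ∂(expLaw b), 0 ≤ y := by
  rw [ae_iff]
  have h : {y : ℝ | ¬ 0 ≤ y} = Iio 0 := by ext y; simp [not_le]
  rw [h, expLaw_eq]; exact expMeasure_Iio_zero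

set_option maxHeartbeats 1000000 in
lemma expLaw_prod_tail {a b c k : ℝ} (ha : 0 < a) (hb : 0 < b) (hc : 0 ≤ c) (hk : 0 ≤ k) :
    ((expLaw b).prod (expLaw a)) {p : ℝ × ℝ | c + k * p.1 ≤ p.2}
      = ENNReal.ofReal (Real.exp (-(c / a)) * (a / (a + k * b))) := by
  haveI : IsProbabilityMeasure (expLaw a) := by
    rw [expLaw_eq]; exact isProbabilityMeasure_expMeasure (inv_pos.2 ha)
  haveI : IsProbabilityMeasure (expLaw b) := by
    rw [expLaw_eq]; exact isProbabilityMeasure_expMeasure (inv_pos.2 hb)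
  have hS : MeasurableSet {p : ℝ × ℝ | c + k * p.1 ≤ p.2} :=
    measurableSet_le (by fun_prop) (by fun_prop)
  rw [Measure.prod_apply hS]
  have hae : ∀ᵐ y ∂(expLaw b),
      expLaw a (Prod.mk y ⁻¹' {p : ℝ × ℝ | c + k * p.1 ≤ p.2})
        = ENNReal.ofReal (Real.exp (-((c + k * y) / a))) := by
    filter_upwards [expLaw_ae_nonneg] with y hy
    have : Prod.mk y ⁻¹' {p : ℝ × ℝ | c + k * p.1 ≤ p.2} = Ici (c + k * y) := rfl
    rw [this, expLaw_eq, expMeasure_Ici (inv_pos.2 ha) (by positivity)]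
    congr 1; ring
  rw [lintegral_congr_ae hae]
  set K := 1 / b + k / a with hK
  have hKpos : 0 < K := by positivity
  have hρ : Measurable fun x : ℝ =>
      ENNReal.ofReal (if 0 ≤ x then (1 / b) * Real.exp (-x / b) else 0) :=
    Measurable.ennreal_ofReal
      (Measurable.ite (measurableSet_le measurable_const measurable_id) (by fun_prop)
        measurable_const)
  have harg : ∀ y : ℝ, -y / b + -((c + k * y) / a) = -(c / a) + -(K * y) := fun y => by
    rw [hK]; field_simp; ring
  rw [show expLaw b = volume.withDensity fun x =>
      ENNReal.ofReal (if 0 ≤ x then (1 / b) * Real.exp (-x / b) else 0) from rfl]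
  rw [lintegral_withDensity_eq_lintegral_mul _ hρ (by fun_prop)]
  have hptw : ∀ y : ℝ,
      ((fun x => ENNReal.ofReal (if 0 ≤ x then (1 / b) * Real.exp (-x / b) else 0)) *
        fun y => ENNReal.ofReal (Real.exp (-((c + k * y) / a)))) y
      = (Ioi (0:ℝ)).indicator
          (fun y => ENNReal.ofReal ((1 / b * Real.exp (-(c / a))) * Real.exp (-(K * y)))) y
      + ({0} : Set ℝ).indicator
          (fun y => ENNReal.ofReal ((1 / b * Real.exp (-(c / a))) * Real.exp (-(K * y)))) y := by
    intro y
    simp only [Pi.mul_apply]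
    rcases lt_trichotomy y 0 with h | h | h
    · rw [if_neg (not_le.2 h), indicator_of_notMem (by simp [h.le, not_lt.2 h.le]),
        indicator_of_notMem (by simp [h.ne]), ENNReal.ofReal_zero, zero_mul, add_zero]
    · subst h
      rw [indicator_of_notMem (by simp), indicator_of_mem (by simp : (0:ℝ) ∈ ({0} : Set ℝ)),
        if_pos le_rfl, zero_add, ← ENNReal.ofReal_mul (by positivity)]
      congr 1
      rw [mul_assoc, ← Real.exp_add, mul_assoc, ← Real.exp_add, harg 0]
    · rw [indicator_of_mem (mem_Ioi.2 h), indicator_of_notMem (by simp [h.ne']), add_zero,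
        if_pos h.le, ← ENNReal.ofReal_mul (by positivity)]
      congr 1
      rw [mul_assoc, ← Real.exp_add, mul_assoc, ← Real.exp_add, harg y]
  rw [lintegral_congr hptw, lintegral_add_right _ ((by fun_prop : Measurable
      (fun y : ℝ => ENNReal.ofReal ((1 / b * Real.exp (-(c / a))) * Real.exp (-(K * y))))).indicator
      (measurableSet_singleton 0)),
    lintegral_indicator (measurableSet_singleton 0) _,
    setLIntegral_measure_zero _ _ (measure_singleton 0), add_zero,
    lintegral_indicator measurableSet_Ioi _]
  have hint0 : IntegrableOn (fun y : ℝ => Real.exp (-(K * y))) (Ioi (0:ℝ)) := by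
    simpa [neg_mul] using exp_neg_integrableOn_Ioi 0 hKpos
  have hint : IntegrableOn (fun y : ℝ => (1 / b * Real.exp (-(c / a))) * Real.exp (-(K * y)))
      (Ioi (0:ℝ)) := hint0.const_mul _
  rw [← ofReal_integral_eq_lintegral_ofReal hint (ae_of_all _ fun y => by positivity)]
  rw [MeasureTheory.integral_const_mul]
  rw [show (fun y : ℝ => Real.exp (-(K * y))) = fun y : ℝ => (fun u => Real.exp (-u)) (K * y)
      from rfl, integral_comp_mul_left_Ioi (fun u => Real.exp (-u)) 0 hKpos, mul_zero,
    integral_exp_neg_Ioi_zero]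
  congr 1
  rw [smul_eq_mul, hK]
  field_simp

theorem stmt_9
    {Ω : Type*} [MeasurableSpace Ω] (μ : Measure Ω) [IsProbabilityMeasure μ]
    (g_sr g_rr g_rd g_sd : Ω → ℝ)
    (hg_sr : Measurable g_sr) (hg_rr : Measurable g_rr)
    (hg_rd : Measurable g_rd) (hg_sd : Measurable g_sd)
    (hindep : iIndepFun (m := fun _ : Fin 4 => Real.measurableSpace)
      ![g_sr, g_rr, g_rd, g_sd] μ)
    (π_sr π_rr π_rd π_sd : ℝ)
    (hπ_sr : 0 < π_sr) (hπ_rr : 0 < π_rr) (hπ_rd : 0 < π_rd) (hπ_sd : 0 < π_sd)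
    (hlaw_sr : μ.map g_sr = expLaw π_sr)
    (hlaw_rr : μ.map g_rr = expLaw π_rr)
    (hlaw_rd : μ.map g_rd = expLaw π_rd)
    (hlaw_sd : μ.map g_sd = expLaw π_sd)
    (P_s P_r : ℝ) (hP_s : 0 < P_s) (hP_r : 0 < P_r)
    (r : ℝ) (hr : 0 < r)
    (η : ℝ) (hη : η = (2 : ℝ) ^ r - 1) :
    (μ ({ω | (P_s * g_sr ω + P_r * g_rr ω + 1) ^ 2
          < (2 : ℝ) ^ (2 * r) * (P_r * g_rr ω + 1) ^ 2} ∪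
        {ω | (P_r * g_rd ω + P_s * g_sd ω + 1) ^ 2
          < (2 : ℝ) ^ (2 * r) * (P_s * g_sd ω + 1) ^ 2})).toReal
      = 1 - P_s * P_r * π_sr * π_rd *
          Real.exp (-(η * (1 / (P_s * π_sr) + 1 / (P_r * π_rd)))) /
          ((P_s * π_sr + P_r * π_rr * η) * (P_r * π_rd + P_s * π_sd * η)) := by
  have h2r : (1:ℝ) < (2:ℝ) ^ r := by
    rw [show (1:ℝ) = (2:ℝ) ^ (0:ℝ) by simp]
    exact (Real.rpow_lt_rpow_left_iff (by norm_num)).mpr hr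
  have hη0 : 0 < η := by rw [hη]; linarith
  have hη2 : (2:ℝ) ^ r = η + 1 := by rw [hη]; ring
  set A := {ω | (P_s * g_sr ω + P_r * g_rr ω + 1) ^ 2
      < (2 : ℝ) ^ (2 * r) * (P_r * g_rr ω + 1) ^ 2} with hAdef
  set B := {ω | (P_r * g_rd ω + P_s * g_sd ω + 1) ^ 2
      < (2 : ℝ) ^ (2 * r) * (P_s * g_sd ω + 1) ^ 2} with hBdef
  have hA : MeasurableSet A := measurableSet_lt (by fun_prop) (by fun_prop)
  have hB : MeasurableSet B := measurableSet_lt (by fun_prop) (by fun_prop)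
  set T1 : Set (ℝ × ℝ) := {p | η / P_s + η * P_r / P_s * p.1 ≤ p.2} with hT1def
  set T2 : Set (ℝ × ℝ) := {p | η / P_r + η * P_s / P_r * p.1 ≤ p.2} with hT2def
  have hT1 : MeasurableSet T1 := measurableSet_le (by fun_prop) (by fun_prop)
  have hT2 : MeasurableSet T2 := measurableSet_le (by fun_prop) (by fun_prop)
  set E1 := (fun ω => (g_rr ω, g_sr ω)) ⁻¹' T1 with hE1def
  set E2 := (fun ω => (g_sd ω, g_rd ω)) ⁻¹' T2 with hE2def
  -- a.e. nonneg
  have keyae : ∀ {g : Ω → ℝ} {mm : ℝ}, Measurable g → μ.map g = expLaw mm →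
      ∀ᵐ ω ∂μ, 0 ≤ g ω := by
    intro g mm hg hlaw
    rw [ae_iff]
    have h1 : {ω | ¬ 0 ≤ g ω} = g ⁻¹' (Iio 0) := by ext ω; simp [not_le]
    rw [h1, ← Measure.map_apply hg measurableSet_Iio, hlaw, expLaw_eq]
    exact expMeasure_Iio_zero
  have hae : ∀ᵐ ω ∂μ, 0 ≤ g_sr ω ∧ 0 ≤ g_rr ω ∧ 0 ≤ g_rd ω ∧ 0 ≤ g_sd ω :=
    ((keyae hg_sr hlaw_sr).and ((keyae hg_rr hlaw_rr).and
      ((keyae hg_rd hlaw_rd).and (keyae hg_sd hlaw_sd))))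
  -- per-hop pointwise equivalence
  have hop : ∀ x y Pa Pb : ℝ, 0 ≤ x → 0 ≤ y → 0 < Pa → 0 < Pb →
      (¬ (Pa * x + Pb * y + 1) ^ 2 < (2:ℝ) ^ (2 * r) * (Pb * y + 1) ^ 2
        ↔ η / Pa + η * Pb / Pa * y ≤ x) := by
    intro x y Pa Pb hx hy hPa hPb
    rw [not_lt, show (2:ℝ) ^ (2 * r) * (Pb * y + 1) ^ 2 = ((2:ℝ) ^ r * (Pb * y + 1)) ^ 2 by
      rw [mul_pow, two_mul, Real.rpow_add (by norm_num : (0:ℝ) < 2)]; ring]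
    rw [pow_le_pow_iff_left₀ (by positivity) (by positivity) (by norm_num)]
    rw [show η / Pa + η * Pb / Pa * y = (η + η * Pb * y) / Pa by ring, div_le_iff₀ hPa, hη2]
    constructor <;> intro h <;> nlinarith
  -- complement of union equals E1 ∩ E2 a.e.
  have hcongr : μ ((A ∪ B)ᶜ) = μ (E1 ∩ E2) := by
    refine measure_congr (Filter.eventuallyEq_set.2 ?_)
    filter_upwards [hae] with ω hω
    obtain ⟨h1, h2, h3, h4⟩ := hω
    simp only [mem_compl_iff, mem_union, mem_inter_iff, hAdef, hBdef, hE1def, hT1def,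
      hE2def, hT2def, mem_setOf_eq, mem_preimage, not_or]
    rw [hop _ _ _ _ h1 h2 hP_s hP_r, hop _ _ _ _ h3 h4 hP_r hP_s]
  -- independence of the two pairs
  have hmeasf : ∀ i, Measurable (![g_sr, g_rr, g_rd, g_sd] i) := by
    intro i; fin_cases i <;> simpa
  have hIndepPairs : IndepFun (fun ω => (g_rr ω, g_sr ω)) (fun ω => (g_sd ω, g_rd ω)) μ := by
    have := hindep.indepFun_prodMk_prodMk hmeasf 1 0 3 2
      (by decide) (by decide) (by decide) (by decide)
    simpa using this
  -- joint laws of pairs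
  have hmap1 : μ.map (fun ω => (g_rr ω, g_sr ω)) = (expLaw π_rr).prod (expLaw π_sr) := by
    have hi : IndepFun g_rr g_sr μ := by
      have := hindep.indepFun (show (1 : Fin 4) ≠ 0 by decide)
      simpa using this
    rw [← hlaw_rr, ← hlaw_sr]
    exact (indepFun_iff_map_prod_eq_prod_map_map hg_rr.aemeasurable hg_sr.aemeasurable).1 hi
  have hmap2 : μ.map (fun ω => (g_sd ω, g_rd ω)) = (expLaw π_sd).prod (expLaw π_rd) := by
    have hi : IndepFun g_sd g_rd μ := by
      have := hindep.indepFun (show (3 : Fin 4) ≠ 2 by decide)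
      simpa using this
    rw [← hlaw_sd, ← hlaw_rd]
    exact (indepFun_iff_map_prod_eq_prod_map_map hg_sd.aemeasurable hg_rd.aemeasurable).1 hi
  -- measures of E1, E2
  set q1 : ℝ := Real.exp (-(η / P_s / π_sr)) * (π_sr / (π_sr + η * P_r / P_s * π_rr)) with hq1def
  set q2 : ℝ := Real.exp (-(η / P_r / π_rd)) * (π_rd / (π_rd + η * P_s / P_r * π_sd)) with hq2def
  have hq1nn : 0 ≤ q1 := by rw [hq1def]; positivity
  have hq2nn : 0 ≤ q2 := by rw [hq2def]; positivity
  have hE1 : μ E1 = ENNReal.ofReal q1 := by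
    rw [hE1def, ← Measure.map_apply (hg_rr.prodMk hg_sr) hT1, hmap1, hT1def,
      expLaw_prod_tail hπ_sr hπ_rr (by positivity) (by positivity), hq1def]
  have hE2 : μ E2 = ENNReal.ofReal q2 := by
    rw [hE2def, ← Measure.map_apply (hg_sd.prodMk hg_rd) hT2, hmap2, hT2def,
      expLaw_prod_tail hπ_rd hπ_sd (by positivity) (by positivity), hq2def]
  have hcomplval : μ ((A ∪ B)ᶜ) = ENNReal.ofReal (q1 * q2) := by
    rw [hcongr, hE1def, hE2def, hIndepPairs.measure_inter_preimage_eq_mul _ _ hT1 hT2,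
      ← hE1def, ← hE2def, hE1, hE2, ← ENNReal.ofReal_mul hq1nn]
  -- convert to reals
  have hsum := measure_add_measure_compl (μ := μ) (hA.union hB)
  rw [hcomplval, measure_univ] at hsum
  have htr := congrArg ENNReal.toReal hsum
  rw [ENNReal.toReal_add (measure_ne_top μ _) ENNReal.ofReal_ne_top, ENNReal.toReal_ofReal
    (by positivity), ENNReal.toReal_one] at htr
  have hfinal : q1 * q2 = P_s * P_r * π_sr * π_rd *
      Real.exp (-(η * (1 / (P_s * π_sr) + 1 / (P_r * π_rd)))) /
      ((P_s * π_sr + P_r * π_rr * η) * (P_r * π_rd + P_s * π_sd * η)) := by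
    rw [hq1def, hq2def]
    rw [show Real.exp (-(η / P_s / π_sr)) * (π_sr / (π_sr + η * P_r / P_s * π_rr)) *
        (Real.exp (-(η / P_r / π_rd)) * (π_rd / (π_rd + η * P_s / P_r * π_sd)))
      = Real.exp (-(η / P_s / π_sr)) * Real.exp (-(η / P_r / π_rd)) *
        ((π_sr / (π_sr + η * P_r / P_s * π_rr)) * (π_rd / (π_rd + η * P_s / P_r * π_sd)))
      by ring, ← Real.exp_add,
      show -(η / P_s / π_sr) + -(η / P_r / π_rd)
        = -(η * (1 / (P_s * π_sr) + 1 / (P_r * π_rd))) by field_simp; ring]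
    have d1 : π_sr + η * P_r / P_s * π_rr ≠ 0 := by positivity
    have d2 : π_rd + η * P_s / P_r * π_sd ≠ 0 := by positivity
    have d3 : P_s * π_sr + P_r * π_rr * η ≠ 0 := by positivity
    have d4 : P_r * π_rd + P_s * π_sd * η ≠ 0 := by positivity
    field_simp
  linarith [htr, hfinal]
end

section
/- Fix P_s, P_r, π_sr, π_rr, π_rd, π_sd > 0, r > 0, set γ = 2^{2r} − 1 and α = P_r·π_rr/(P_r·π_rr + 1). Then the left limit as C → 1⁻ of the function C ↦ 1 − exp( −( Ψ_γ(C)/(P_r·π_rd·(1 − C²)) + ((P_r·π_rr + 1)/(P_s·π_sr))·Ψ_γ(α·C) ) ) / ( P_s·π_sd·Ψ_γ(C)/(P_r·π_rd·(1 − C²)) + 1 ), defined for C ∈ [0,1), equals 1 − 2·P_r·π_rd · exp( −( γ/(2·P_r·π_rd) + ((P_r·π_rr + 1)/(P_s·π_sr))·Ψ_γ(α) ) ) / ( 2·P_r·π_rd + γ·P_s·π_sd ). -/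
open Real Filter Topology

/-- `Psi γ x = √(1 + γ(1 - x²)) - 1`. -/
noncomputable def Psi (γ x : ℝ) : ℝ := Real.sqrt (1 + γ * (1 - x ^ 2)) - 1

theorem stmt_11
    (P_s P_r π_sr π_rr π_rd π_sd : ℝ)
    (hP_s : 0 < P_s) (hP_r : 0 < P_r) (hπ_sr : 0 < π_sr) (hπ_rr : 0 < π_rr)
    (hπ_rd : 0 < π_rd) (hπ_sd : 0 < π_sd)
    (r : ℝ) (hr : 0 < r)
    (γ α : ℝ) (hγ : γ = (2 : ℝ) ^ (2 * r) - 1)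
    (hα : α = P_r * π_rr / (P_r * π_rr + 1)) :
    Tendsto
      (fun C : ℝ =>
        1 - Real.exp (-(Psi γ C / (P_r * π_rd * (1 - C ^ 2)) +
              ((P_r * π_rr + 1) / (P_s * π_sr)) * Psi γ (α * C))) /
            (P_s * π_sd * Psi γ C / (P_r * π_rd * (1 - C ^ 2)) + 1))
      (nhdsWithin 1 (Set.Ico (0 : ℝ) 1))
      (nhds (1 - 2 * P_r * π_rd *
          Real.exp (-(γ / (2 * P_r * π_rd) +
            ((P_r * π_rr + 1) / (P_s * π_sr)) * Psi γ α)) /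
          (2 * P_r * π_rd + γ * P_s * π_sd))) := by
  have hγ0 : 0 ≤ γ := by
    rw [hγ]
    have h1 : (1 : ℝ) ≤ (2 : ℝ) ^ (2 * r) := Real.one_le_rpow one_le_two (by positivity)
    linarith
  set k := (P_r * π_rr + 1) / (P_s * π_sr) with hk
  have hd : 0 < P_r * π_rd := by positivity
  -- the surrogate function, equal to the original on Ico 0 1, continuous at 1
  set g : ℝ → ℝ := fun C =>
    1 - Real.exp (-(γ / (P_r * π_rd * (Real.sqrt (1 + γ * (1 - C ^ 2)) + 1)) +
          k * Psi γ (α * C))) /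
        (P_s * π_sd * γ / (P_r * π_rd * (Real.sqrt (1 + γ * (1 - C ^ 2)) + 1)) + 1)
    with hg
  -- limits of pieces
  have hs : Tendsto (fun C : ℝ => Real.sqrt (1 + γ * (1 - C ^ 2))) (𝓝 1) (𝓝 1) := by
    have : Continuous fun C : ℝ => Real.sqrt (1 + γ * (1 - C ^ 2)) := by
      exact Real.continuous_sqrt.comp (by continuity)
    have h := this.tendsto 1
    simpa using h
  have hden : Tendsto (fun C : ℝ => P_r * π_rd * (Real.sqrt (1 + γ * (1 - C ^ 2)) + 1))
      (𝓝 1) (𝓝 (2 * (P_r * π_rd))) := by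
    have := (tendsto_const_nhds (x := P_r * π_rd) (f := 𝓝 (1:ℝ))).mul
      ((hs.add (tendsto_const_nhds (x := (1:ℝ)))))
    convert this using 2
    ring
  have hdenne : (2 * (P_r * π_rd)) ≠ 0 := by positivity
  have hA : Tendsto (fun C : ℝ => γ / (P_r * π_rd * (Real.sqrt (1 + γ * (1 - C ^ 2)) + 1)))
      (𝓝 1) (𝓝 (γ / (2 * (P_r * π_rd)))) := tendsto_const_nhds.div hden hdenne
  have hB : Tendsto (fun C : ℝ => k * Psi γ (α * C)) (𝓝 1) (𝓝 (k * Psi γ α)) := by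
    have hc : Continuous fun C : ℝ => k * Psi γ (α * C) := by
      unfold Psi
      exact continuous_const.mul ((Real.continuous_sqrt.comp (by continuity)).sub
        continuous_const)
    simpa using hc.tendsto 1
  have hE : Tendsto (fun C : ℝ =>
      Real.exp (-(γ / (P_r * π_rd * (Real.sqrt (1 + γ * (1 - C ^ 2)) + 1)) + k * Psi γ (α * C))))
      (𝓝 1) (𝓝 (Real.exp (-(γ / (2 * (P_r * π_rd)) + k * Psi γ α)))) :=
    (Real.continuous_exp.tendsto _).comp ((hA.add hB).neg)
  have hD : Tendsto (fun C : ℝ =>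
      P_s * π_sd * γ / (P_r * π_rd * (Real.sqrt (1 + γ * (1 - C ^ 2)) + 1)) + 1)
      (𝓝 1) (𝓝 (P_s * π_sd * γ / (2 * (P_r * π_rd)) + 1)) :=
    (tendsto_const_nhds.div hden hdenne).add tendsto_const_nhds
  have hDne : P_s * π_sd * γ / (2 * (P_r * π_rd)) + 1 ≠ 0 := by positivity
  have hglim : Tendsto g (𝓝 1)
      (𝓝 (1 - Real.exp (-(γ / (2 * (P_r * π_rd)) + k * Psi γ α)) /
        (P_s * π_sd * γ / (2 * (P_r * π_rd)) + 1))) :=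
    tendsto_const_nhds.sub (hE.div hD hDne)
  -- value equals the stated limit
  have hval : (1 - Real.exp (-(γ / (2 * (P_r * π_rd)) + k * Psi γ α)) /
        (P_s * π_sd * γ / (2 * (P_r * π_rd)) + 1)) =
      1 - 2 * P_r * π_rd *
          Real.exp (-(γ / (2 * P_r * π_rd) + k * Psi γ α)) /
          (2 * P_r * π_rd + γ * P_s * π_sd) := by
    have h2 : (2 * P_r * π_rd + γ * P_s * π_sd) ≠ 0 := by positivity
    rw [show (2 * P_r * π_rd : ℝ) = 2 * (P_r * π_rd) by ring] at h2 ⊢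
    field_simp
    ring
  -- equality on the set
  have heq : ∀ C ∈ Set.Ico (0:ℝ) 1,
      (1 - Real.exp (-(Psi γ C / (P_r * π_rd * (1 - C ^ 2)) + k * Psi γ (α * C))) /
        (P_s * π_sd * Psi γ C / (P_r * π_rd * (1 - C ^ 2)) + 1)) = g C := by
    intro C hC
    obtain ⟨hC0, hC1⟩ := hC
    have hu : 0 < 1 - C ^ 2 := by nlinarith
    set a : ℝ := 1 + γ * (1 - C ^ 2) with ha
    have ha0 : 0 ≤ a := by nlinarith
    have hsq : Real.sqrt a * Real.sqrt a = a := Real.mul_self_sqrt ha0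
    have hsp : 0 < Real.sqrt a + 1 := by positivity
    have hpsi : Psi γ C = γ * (1 - C ^ 2) / (Real.sqrt a + 1) := by
      rw [Psi, ← ha]
      rw [eq_div_iff (ne_of_gt hsp)]
      nlinarith [hsq]
    have hkey : Psi γ C / (P_r * π_rd * (1 - C ^ 2)) =
        γ / (P_r * π_rd * (Real.sqrt a + 1)) := by
      rw [hpsi]
      field_simp
    have hkey2 : P_s * π_sd * Psi γ C / (P_r * π_rd * (1 - C ^ 2)) =
        P_s * π_sd * γ / (P_r * π_rd * (Real.sqrt a + 1)) := by
      rw [hpsi]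
      field_simp
    rw [hg]
    simp only [← ha]
    rw [hkey, hkey2]
  have hcongr : (fun C : ℝ =>
        1 - Real.exp (-(Psi γ C / (P_r * π_rd * (1 - C ^ 2)) + k * Psi γ (α * C))) /
            (P_s * π_sd * Psi γ C / (P_r * π_rd * (1 - C ^ 2)) + 1))
      =ᶠ[𝓝[Set.Ico (0:ℝ) 1] (1:ℝ)] g :=
    eventually_nhdsWithin_of_forall heq
  have := (hglim.mono_left nhdsWithin_le_nhds).congr' hcongr.symm
  rw [hval] at this
  convert this using 2
end

section
/- Fix P_s, P_r, π_sr, π_rd, π_sd > 0 and γ > 0. Then, as π_rr → ∞, the maximally-improper upper-bound expression π_rr ↦ 1 − 2·P_r·π_rd · exp( −( γ/(2·P_r·π_rd) + ((P_r·π_rr + 1)/(P_s·π_sr)) · Ψ_γ( P_r·π_rr/(P_r·π_rr + 1) ) ) ) / ( 2·P_r·π_rd + γ·P_s·π_sd ) converges to the constant K = 1 − 2·P_r·π_rd · exp( −( γ/(2·P_r·π_rd) + γ/(P_s·π_sr) ) ) / ( 2·P_r·π_rd + γ·P_s·π_sd ). -/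
open Real Filter Topology

lemma aux_tPsi (γ : ℝ) (hγ : 0 < γ) :
    Tendsto (fun t : ℝ => t * (Real.sqrt (1 + γ * (1 - ((t - 1) / t) ^ 2)) - 1))
      atTop (nhds γ) := by
  have hinv : Tendsto (fun t : ℝ => t⁻¹) atTop (nhds 0) := tendsto_inv_atTop_zero
  have hnum : Tendsto (fun t : ℝ => γ * (2 - t⁻¹)) atTop (nhds (γ * (2 - 0))) :=
    (tendsto_const_nhds.sub hinv).const_mul γ
  have harg : Tendsto (fun t : ℝ => 1 + γ * (2 * t⁻¹ - t⁻¹ * t⁻¹)) atTop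
      (nhds (1 + γ * (2 * 0 - 0 * 0))) :=
    tendsto_const_nhds.add (((hinv.const_mul 2).sub (hinv.mul hinv)).const_mul γ)
  have hden : Tendsto (fun t : ℝ => Real.sqrt (1 + γ * (2 * t⁻¹ - t⁻¹ * t⁻¹)) + 1)
      atTop (nhds 2) := by
    have := ((Real.continuous_sqrt.tendsto _).comp harg).add
      (tendsto_const_nhds (x := (1 : ℝ)))
    simpa [one_add_one_eq_two] using this
  have hlim : Tendsto (fun t : ℝ => γ * (2 - t⁻¹) /
      (Real.sqrt (1 + γ * (2 * t⁻¹ - t⁻¹ * t⁻¹)) + 1)) atTop (nhds γ) := by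
    have : Tendsto (fun t : ℝ => γ * (2 - t⁻¹) / (Real.sqrt (1 + γ * (2 * t⁻¹ - t⁻¹ * t⁻¹)) + 1)) atTop (nhds (γ * (2 - 0) / 2)) := hnum.div hden (by norm_num)
    convert this using 2
    ring
  refine hlim.congr' ?_
  filter_upwards [eventually_ge_atTop (1 : ℝ)] with t ht
  have ht0 : (0 : ℝ) < t := lt_of_lt_of_le one_pos ht
  have hA : 1 + γ * (2 * t⁻¹ - t⁻¹ * t⁻¹) = 1 + γ * (1 - ((t - 1) / t) ^ 2) := by
    field_simp
    ring
  set u : ℝ := γ * (2 * t⁻¹ - t⁻¹ * t⁻¹) with hu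
  have hinvle : t⁻¹ ≤ 1 := by
    rw [inv_le_one_iff₀]; right; exact ht
  have hinvpos : 0 < t⁻¹ := inv_pos.mpr ht0
  have hu0 : 0 ≤ u := by
    have : 0 ≤ 2 * t⁻¹ - t⁻¹ * t⁻¹ := by nlinarith
    positivity
  have h1u : (0:ℝ) ≤ 1 + u := by linarith
  set s : ℝ := Real.sqrt (1 + u) with hs
  have hs2 : s ^ 2 = 1 + u := Real.sq_sqrt h1u
  have hspos : 0 ≤ s := Real.sqrt_nonneg _
  have hdenne : s + 1 ≠ 0 := by positivity
  rw [← hA]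
  rw [div_eq_iff hdenne]
  have htinv : t * t⁻¹ = 1 := mul_inv_cancel₀ ht0.ne'
  nlinarith [hs2, htinv]

theorem stmt_13
    (P_s P_r π_sr π_rd π_sd γ : ℝ)
    (hP_s : 0 < P_s) (hP_r : 0 < P_r) (hπ_sr : 0 < π_sr)
    (hπ_rd : 0 < π_rd) (hπ_sd : 0 < π_sd) (hγ : 0 < γ) :
    Tendsto
      (fun π_rr : ℝ =>
        1 - 2 * P_r * π_rd *
          Real.exp (-(γ / (2 * P_r * π_rd) +
            ((P_r * π_rr + 1) / (P_s * π_sr)) *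
              Psi γ (P_r * π_rr / (P_r * π_rr + 1)))) /
          (2 * P_r * π_rd + γ * P_s * π_sd))
      atTop
      (nhds (1 - 2 * P_r * π_rd *
        Real.exp (-(γ / (2 * P_r * π_rd) + γ / (P_s * π_sr))) /
        (2 * P_r * π_rd + γ * P_s * π_sd))) := by
  have ht : Tendsto (fun π_rr : ℝ => P_r * π_rr + 1) atTop atTop :=
    (tendsto_atTop_add_const_right _ 1
      (tendsto_id.const_mul_atTop hP_r))
  have hcomp : Tendsto (fun π_rr : ℝ =>
      (P_r * π_rr + 1) * (Real.sqrt (1 + γ *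
        (1 - ((P_r * π_rr + 1 - 1) / (P_r * π_rr + 1)) ^ 2)) - 1))
      atTop (nhds γ) := (aux_tPsi γ hγ).comp ht
  have hmul : Tendsto (fun π_rr : ℝ =>
      ((P_r * π_rr + 1) / (P_s * π_sr)) * Psi γ (P_r * π_rr / (P_r * π_rr + 1)))
      atTop (nhds (γ / (P_s * π_sr))) := by
    have := hcomp.div_const (P_s * π_sr)
    refine this.congr (fun x => ?_)
    simp only [add_sub_cancel_right, Psi]
    ring
  have h1 : Tendsto (fun π_rr : ℝ => -(γ / (2 * P_r * π_rd) +
      ((P_r * π_rr + 1) / (P_s * π_sr)) * Psi γ (P_r * π_rr / (P_r * π_rr + 1))))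
      atTop (nhds (-(γ / (2 * P_r * π_rd) + γ / (P_s * π_sr)))) :=
    (tendsto_const_nhds.add hmul).neg
  exact ((((Real.continuous_exp.tendsto _).comp h1).const_mul (2 * P_r * π_rd)).div_const _).const_sub 1
end

section
/- Fix a, b, c > 0, γ > 0 and α ∈ (0,1). Then the function f(x) = 1 − exp( −( a·Ψ_γ(x)/(1 − x²) + b·Ψ_γ(α·x) ) ) / ( c·Ψ_γ(x)/(1 − x²) + 1 ) is quasiconvex on the interval [0,1); that is, for every real t the sublevel set { x ∈ [0,1) : f(x) ≤ t } is convex (equивalently, f is either monotone on [0,1) or unimodal with a unique interior minimum). -/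
open Real

lemma Gconv_aux (a b c γ α β : ℝ) (ha : 0 < a) (hb : 0 < b) (hc : 0 < c) (hγ : 0 < γ)
    (hβ : 0 < β) :
    ConvexOn ℝ (Set.Ioi (0:ℝ))
      (fun q => a*γ*(1+q)⁻¹ + (Real.log (1+q+c*γ) - Real.log (1+q))
        + b*(Real.sqrt (α^2*q^2 + β) - 1)) := by
  set G : ℝ → ℝ := fun q => a*γ*(1+q)⁻¹ + (Real.log (1+q+c*γ) - Real.log (1+q))
        + b*(Real.sqrt (α^2*q^2 + β) - 1) with hGdef
  set G' : ℝ → ℝ := fun q => -(a*γ) * ((1+q)^2)⁻¹ + ((1+q+c*γ)⁻¹ - (1+q)⁻¹)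
        + b*(α^2*q / Real.sqrt (α^2*q^2 + β)) with hG'def
  have hm : ∀ q : ℝ, 0 < α^2*q^2 + β := by intro q; positivity
  have hS : ∀ q : ℝ, 0 < Real.sqrt (α^2*q^2 + β) := fun q => Real.sqrt_pos.2 (hm q)
  -- first derivative
  have hd1 : ∀ q ∈ Set.Ioi (0:ℝ), HasDerivAt G (G' q) q := by
    intro q hq
    have hq0 : (0:ℝ) < q := hq
    have h1 : HasDerivAt (fun x : ℝ => 1 + x) 1 q := (hasDerivAt_id q).const_add 1
    have hne1 : (1:ℝ) + q ≠ 0 := by positivity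
    have hne2 : (1:ℝ) + q + c*γ ≠ 0 := by positivity
    have h2 : HasDerivAt (fun x : ℝ => 1 + x + c*γ) 1 q := h1.add_const _
    have hmq : HasDerivAt (fun x : ℝ => α^2*x^2 + β) (α^2*(2*q^1)) q :=
      ((hasDerivAt_pow 2 q).const_mul (α^2)).add_const β
    have hsq : HasDerivAt (fun x : ℝ => Real.sqrt (α^2*x^2 + β))
        (α^2*(2*q^1) / (2 * Real.sqrt (α^2*q^2+β))) q := hmq.sqrt (ne_of_gt (hm q))
    have ht1 : HasDerivAt (fun x : ℝ => a*γ*(1+x)⁻¹) (a*γ * (-1/(1+q)^2)) q := by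
      simpa using (h1.inv hne1).const_mul (a*γ)
    have ht2 : HasDerivAt (fun x : ℝ => Real.log (1+x+c*γ) - Real.log (1+x))
        (1/(1+q+c*γ) - 1/(1+q)) q := (h2.log hne2).sub (h1.log hne1)
    have ht3 : HasDerivAt (fun x : ℝ => b*(Real.sqrt (α^2*x^2 + β) - 1))
        (b * (α^2*(2*q^1) / (2 * Real.sqrt (α^2*q^2+β)))) q := by
      simpa using (hsq.sub_const 1).const_mul b
    have h := (ht1.add ht2).add ht3
    have hval : a*γ * (-1/(1+q)^2) + (1/(1+q+c*γ) - 1/(1+q))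
        + b * (α^2*(2*q^1) / (2 * Real.sqrt (α^2*q^2+β))) = G' q := by
      rw [hG'def]; ring
    rw [hval] at h
    exact h
  -- second derivative
  set G'' : ℝ → ℝ := fun q =>
    -(a*γ) * (-(2*(1+q)^1*1)/((1+q)^2)^2)
    + (-1/(1+q+c*γ)^2 - -1/(1+q)^2)
    + b*((α^2*1 * Real.sqrt (α^2*q^2+β)
        - α^2*q * (α^2*(2*q^1) / (2 * Real.sqrt (α^2*q^2+β)))) / (Real.sqrt (α^2*q^2+β))^2)
    with hG''def
  have hd2 : ∀ q ∈ Set.Ioi (0:ℝ), HasDerivAt G' (G'' q) q := by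
    intro q hq
    have hq0 : (0:ℝ) < q := hq
    have h1 : HasDerivAt (fun x : ℝ => 1 + x) 1 q := (hasDerivAt_id q).const_add 1
    have hne1 : (1:ℝ) + q ≠ 0 := by positivity
    have hne2 : (1:ℝ) + q + c*γ ≠ 0 := by positivity
    have h2 : HasDerivAt (fun x : ℝ => 1 + x + c*γ) 1 q := h1.add_const _
    have hmq : HasDerivAt (fun x : ℝ => α^2*x^2 + β) (α^2*(2*q^1)) q :=
      ((hasDerivAt_pow 2 q).const_mul (α^2)).add_const β
    have hsq : HasDerivAt (fun x : ℝ => Real.sqrt (α^2*x^2 + β))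
        (α^2*(2*q^1) / (2 * Real.sqrt (α^2*q^2+β))) q := hmq.sqrt (ne_of_gt (hm q))
    have hp2 : HasDerivAt (fun x : ℝ => (1+x)^2) (2*(1+q)^1*1) q := h1.pow 2
    have hpne : ((1:ℝ)+q)^2 ≠ 0 := by positivity
    have ht1 : HasDerivAt (fun x : ℝ => -(a*γ) * ((1+x)^2)⁻¹)
        (-(a*γ) * (-(2*(1+q)^1*1)/((1+q)^2)^2)) q := (hp2.inv hpne).const_mul (-(a*γ))
    have ht2 : HasDerivAt (fun x : ℝ => (1+x+c*γ)⁻¹ - (1+x)⁻¹)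
        (-1/(1+q+c*γ)^2 - -1/(1+q)^2) q := (h2.inv hne2).sub (h1.inv hne1)
    have hu : HasDerivAt (fun x : ℝ => α^2*x) (α^2*1) q := (hasDerivAt_id q).const_mul (α^2)
    have ht3 : HasDerivAt (fun x : ℝ => b*(α^2*x / Real.sqrt (α^2*x^2 + β)))
        (b*((α^2*1 * Real.sqrt (α^2*q^2+β)
        - α^2*q * (α^2*(2*q^1) / (2 * Real.sqrt (α^2*q^2+β)))) / (Real.sqrt (α^2*q^2+β))^2)) q :=
      (hu.div hsq (ne_of_gt (hS q))).const_mul b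
    exact (ht1.add ht2).add ht3
  -- nonnegativity of G''
  have hnn : ∀ q ∈ Set.Ioi (0:ℝ), 0 ≤ G'' q := by
    intro q hq
    have hq0 : (0:ℝ) < q := hq
    have hS2 : (Real.sqrt (α^2*q^2+β))^2 = α^2*q^2 + β := Real.sq_sqrt (hm q).le
    have hSpos := hS q
    have hA1 : (0:ℝ) ≤ -(a*γ) * (-(2*(1+q)^1*1)/((1+q)^2)^2) := by
      have : -(a*γ) * (-(2*(1+q)^1*1)/((1+q)^2)^2) = 2*(a*γ)*(1+q)/((1+q)^2)^2 := by ring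
      rw [this]; positivity
    have hA2 : (0:ℝ) ≤ -1/(1+q+c*γ)^2 - -1/(1+q)^2 := by
      have h1 : (0:ℝ) < (1+q)^2 := by positivity
      have h2 : ((1:ℝ)+q)^2 ≤ (1+q+c*γ)^2 := by nlinarith [mul_pos hc hγ]
      have h3 := one_div_le_one_div_of_le h1 h2
      have h4 : -1/(1+q+c*γ)^2 - -1/(1+q)^2 = 1/(1+q)^2 - 1/(1+q+c*γ)^2 := by ring
      linarith
    have hA3 : (0:ℝ) ≤ b*((α^2*1 * Real.sqrt (α^2*q^2+β)
        - α^2*q * (α^2*(2*q^1) / (2 * Real.sqrt (α^2*q^2+β)))) / (Real.sqrt (α^2*q^2+β))^2) := by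
      have hnum : α^2*1 * Real.sqrt (α^2*q^2+β)
          - α^2*q * (α^2*(2*q^1) / (2 * Real.sqrt (α^2*q^2+β)))
          = α^2*β / Real.sqrt (α^2*q^2+β) := by
        rw [eq_div_iff (ne_of_gt hSpos)]
        field_simp
        linear_combination α^2 * hS2
      rw [hnum]
      positivity
    rw [hG''def]
    dsimp only
    linarith
  -- assemble
  have hop : interior (Set.Ioi (0:ℝ)) = Set.Ioi 0 := interior_Ioi
  refine convexOn_of_deriv2_nonneg (convex_Ioi 0) ?_ ?_ ?_ ?_
  · exact fun x hx => (hd1 x hx).differentiableAt.continuousAt.continuousWithinAt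
  · rw [hop]; exact fun x hx => (hd1 x hx).differentiableAt.differentiableWithinAt
  · rw [hop]
    intro x hx
    have hev : deriv G =ᶠ[nhds x] G' :=
      Filter.eventuallyEq_of_mem (isOpen_Ioi.mem_nhds hx) (fun y hy => (hd1 y hy).deriv)
    exact (hev.differentiableAt_iff.2 (hd2 x hx).differentiableAt).differentiableWithinAt
  · rw [hop]
    intro x hx
    have hev : deriv G =ᶠ[nhds x] G' :=
      Filter.eventuallyEq_of_mem (isOpen_Ioi.mem_nhds hx) (fun y hy => (hd1 y hy).deriv)
    have : deriv (deriv G) x = G'' x := by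
      rw [hev.deriv_eq]; exact (hd2 x hx).deriv
    show 0 ≤ deriv (deriv G) x
    rw [this]; exact hnn x hx

theorem stmt_16
    (a b c γ α : ℝ) (ha : 0 < a) (hb : 0 < b) (hc : 0 < c) (hγ : 0 < γ)
    (hα : α ∈ Set.Ioo (0 : ℝ) 1) :
    QuasiconvexOn ℝ (Set.Ico (0 : ℝ) 1)
      (fun x => 1 - Real.exp (-(a * Psi γ x / (1 - x ^ 2) + b * Psi γ (α * x))) /
        (c * Psi γ x / (1 - x ^ 2) + 1)) := by
  obtain ⟨hα0, hα1⟩ := hα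
  set β : ℝ := (1 - α^2) * (1 + γ) with hβdef
  have hβ : 0 < β := by
    have h2 : α^2 < 1 := by nlinarith
    have : 0 < 1 + γ := by linarith
    rw [hβdef]; nlinarith
  set G : ℝ → ℝ := fun q => a*γ*(1+q)⁻¹ + (Real.log (1+q+c*γ) - Real.log (1+q))
        + b*(Real.sqrt (α^2*q^2 + β) - 1) with hGdef
  have hGconv : ConvexOn ℝ (Set.Ioi (0:ℝ)) G := Gconv_aux a b c γ α β ha hb hc hγ hβ
  set P : ℝ → ℝ := fun u => Real.sqrt (1 + γ*(1 - u^2)) with hPdef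
  -- basic facts for u ∈ Ico 0 1
  have hbase : ∀ u ∈ Set.Ico (0:ℝ) 1, 0 < 1 - u^2 ∧ 1 ≤ P u ∧ (P u)^2 = 1 + γ*(1-u^2) := by
    intro u hu
    have h1 : u^2 < 1 := by nlinarith [hu.1, hu.2]
    have harg : (1:ℝ) ≤ 1 + γ*(1-u^2) := by nlinarith
    have hP1 : 1 ≤ P u := by
      have := Real.sqrt_le_sqrt harg
      simpa [hPdef, Real.sqrt_one] using this
    exact ⟨by linarith, hP1, Real.sq_sqrt (by linarith)⟩
  -- representation lemma
  have hrep : ∀ u ∈ Set.Ico (0:ℝ) 1,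
      1 - Real.exp (-(a * Psi γ u / (1 - u ^ 2) + b * Psi γ (α * u))) /
        (c * Psi γ u / (1 - u ^ 2) + 1) = 1 - Real.exp (-(G (P u))) := by
    intro u hu
    obtain ⟨h1u, hP1, hPu2⟩ := hbase u hu
    have hPne : (1:ℝ) + P u ≠ 0 := by positivity
    have hPsiu : Psi γ u = P u - 1 := rfl
    have e1 : a * Psi γ u / (1 - u^2) = a*γ*(1+P u)⁻¹ := by
      rw [hPsiu, div_eq_iff (ne_of_gt h1u)]
      field_simp
      linear_combination hPu2
    have e2 : c * Psi γ u / (1 - u^2) = c*γ*(1+P u)⁻¹ := by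
      rw [hPsiu, div_eq_iff (ne_of_gt h1u)]
      field_simp
      linear_combination hPu2
    have e3 : Psi γ (α*u) = Real.sqrt (α^2*(P u)^2 + β) - 1 := by
      unfold Psi
      congr 2
      rw [hPu2, hβdef]
      ring
    have hD : (0:ℝ) < c*γ*(1+P u)⁻¹ + 1 := by
      have : (0:ℝ) < (1 + P u)⁻¹ := by positivity
      positivity
    have hlogD : Real.log (c*γ*(1+P u)⁻¹ + 1) = Real.log (1+P u+c*γ) - Real.log (1+P u) := by
      have hx : c*γ*(1+P u)⁻¹ + 1 = (1+P u+c*γ)/(1+P u) := by field_simp; ring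
      rw [hx, Real.log_div (by positivity) hPne]
    rw [e1, e2, e3]
    have hGPu : G (P u) = (a*γ*(1+P u)⁻¹ + b * (Real.sqrt (α^2*(P u)^2 + β) - 1))
        + Real.log (c*γ*(1+P u)⁻¹ + 1) := by
      rw [hGdef]; dsimp only; rw [hlogD]; ring
    have key : Real.exp (-(a*γ*(1+P u)⁻¹ + b * (Real.sqrt (α^2*(P u)^2 + β) - 1))) /
        (c*γ*(1+P u)⁻¹ + 1) = Real.exp (-(G (P u))) := by
      have h1 : Real.exp (-(a*γ*(1+P u)⁻¹ + b * (Real.sqrt (α^2*(P u)^2 + β) - 1))) /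
          (c*γ*(1+P u)⁻¹ + 1)
          = Real.exp (-(a*γ*(1+P u)⁻¹ + b * (Real.sqrt (α^2*(P u)^2 + β) - 1))
              - Real.log (c*γ*(1+P u)⁻¹ + 1)) := by
        rw [Real.exp_sub, Real.exp_log hD]
      rw [h1, hGPu]
      congr 1
      ring
    rw [key]
  -- main quasiconvexity argument
  intro r
  rw [convex_iff_ordConnected]
  constructor
  intro x hx z hz y hy
  obtain ⟨hx1, hx2⟩ := hx
  obtain ⟨hz1, hz2⟩ := hz
  have hy1 : y ∈ Set.Ico (0:ℝ) 1 := ⟨le_trans hx1.1 hy.1, lt_of_le_of_lt hy.2 hz1.2⟩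
  refine ⟨hy1, ?_⟩
  -- P is antitone on these points
  have hPanti : ∀ u v : ℝ, u ∈ Set.Ico (0:ℝ) 1 → v ∈ Set.Ico (0:ℝ) 1 → u ≤ v → P v ≤ P u := by
    intro u v hu hv huv
    apply Real.sqrt_le_sqrt
    have h2 : u^2 ≤ v^2 := by nlinarith [hu.1]
    nlinarith
  have hPzy := hPanti y z hy1 hz1 hy.2
  have hPyx := hPanti x y hx1 hy1 hy.1
  have hPx := (hbase x hx1).2.1
  have hPz := (hbase z hz1).2.1
  have hGy : G (P y) ≤ max (G (P z)) (G (P x)) := by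
    apply hGconv.le_on_segment (x := P z) (y := P x)
    · exact Set.mem_Ioi.2 (by linarith)
    · exact Set.mem_Ioi.2 (by linarith)
    · rw [segment_eq_Icc (le_trans hPzy hPyx)]
      exact ⟨hPzy, hPyx⟩
  dsimp only at hx2 hz2 ⊢
  rw [hrep y hy1]
  have hmono : ∀ s t : ℝ, s ≤ t → 1 - Real.exp (-s) ≤ 1 - Real.exp (-t) := by
    intro s t hst
    have := Real.exp_le_exp.2 (neg_le_neg hst)
    linarith
  rcases le_max_iff.1 hGy with h | h
  · calc 1 - Real.exp (-(G (P y))) ≤ 1 - Real.exp (-(G (P z))) := hmono _ _ h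
      _ ≤ r := by rw [← hrep z hz1]; exact hz2
  · calc 1 - Real.exp (-(G (P y))) ≤ 1 - Real.exp (-(G (P x))) := hmono _ _ h
      _ ≤ r := by rw [← hrep x hx1]; exact hx2
end

section
/- Fix a, b, c, d > 0. Then the function f(x) = 1 − c · exp( −( a/x + b·x ) ) / ( d/x + 1 ) is quasiconvex on (0, ∞); that is, for every real t the sublevel set { x ∈ (0,∞) : f(x) ≤ t } is convex (equivalently, the function x ↦ exp(−(a/x + b·x))/(d/x + 1) is increasing up to a unique point and decreasing thereafter, or monotone). -/
open Real Set

theorem stmt_17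
    (a b c d : ℝ) (ha : 0 < a) (hb : 0 < b) (hc : 0 < c) (hd : 0 < d) :
    QuasiconvexOn ℝ (Set.Ioi (0 : ℝ))
      (fun x => 1 - c * Real.exp (-(a / x + b * x)) / (d / x + 1)) := by
  set h : ℝ → ℝ := fun x => Real.log c - a / x - b * x + Real.log x - Real.log (x + d) with hh
  -- derivative of h
  have hder : ∀ x ∈ Ioi (0:ℝ), HasDerivAt h (a / x ^ 2 - b + 1 / x - 1 / (x + d)) x := by
    intro x hx
    have hx0 : (0:ℝ) < x := hx
    have hxne : x ≠ 0 := ne_of_gt hx0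
    have hxd : (0:ℝ) < x + d := by linarith
    have h1 : HasDerivAt (fun x : ℝ => a / x) (-(a / x ^ 2)) x := by
      simpa [div_eq_mul_inv, sq, mul_comm, mul_assoc, neg_mul] using
        (hasDerivAt_inv hxne).const_mul a
    have h2 : HasDerivAt (fun x : ℝ => b * x) b x := by
      simpa using (hasDerivAt_id x).const_mul b
    have h3 : HasDerivAt Real.log (1 / x) x := by
      simpa [one_div] using Real.hasDerivAt_log hxne
    have h4 : HasDerivAt (fun x : ℝ => Real.log (x + d)) (1 / (x + d)) x := by
      simpa [one_div] using (((hasDerivAt_id x).add_const d).log (ne_of_gt hxd))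
    have := ((((hasDerivAt_const x (Real.log c)).sub h1).sub h2).add h3).sub h4
    refine this.congr_deriv ?_
    ring
  have hdiff : DifferentiableOn ℝ h (Ioi (0:ℝ)) := fun x hx =>
    ((hder x hx).differentiableAt).differentiableWithinAt
  have hanti : AntitoneOn (deriv h) (Ioi (0:ℝ)) := by
    intro x hx y hy hxy
    rw [(hder x hx).deriv, (hder y hy).deriv]
    have hx0 : (0:ℝ) < x := hx
    have hy0 : (0:ℝ) < y := hy
    have hxd : (0:ℝ) < x + d := by linarith
    have hyd : (0:ℝ) < y + d := by linarith
    have e1 : 1 / x - 1 / (x + d) = d / (x * (x + d)) := by field_simp; ring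
    have e2 : 1 / y - 1 / (y + d) = d / (y * (y + d)) := by field_simp; ring
    have h1 : a / y ^ 2 ≤ a / x ^ 2 := by
      apply div_le_div_of_nonneg_left ha.le (by positivity)
      nlinarith
    have h2 : d / (y * (y + d)) ≤ d / (x * (x + d)) := by
      apply div_le_div_of_nonneg_left hd.le (by positivity)
      nlinarith
    linarith [e1, e2, h1, h2]
  have hcon : ConcaveOn ℝ (Ioi (0:ℝ)) h := by
    apply AntitoneOn.concaveOn_of_deriv (convex_Ioi 0) hdiff.continuousOn
    · rwa [interior_Ioi]
    · rwa [interior_Ioi]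
  -- key identity
  have hkey : ∀ x ∈ Ioi (0:ℝ),
      c * Real.exp (-(a / x + b * x)) / (d / x + 1) = Real.exp (h x) := by
    intro x hx
    have hx0 : (0:ℝ) < x := hx
    have hxne : x ≠ 0 := ne_of_gt hx0
    have hxd : (0:ℝ) < x + d := by linarith
    have hlhs : (0:ℝ) < c * Real.exp (-(a / x + b * x)) / (d / x + 1) := by positivity
    rw [← Real.exp_log hlhs]
    congr 1
    have hdx1 : d / x + 1 = (x + d) / x := by field_simp; ring
    rw [Real.log_div (by positivity) (by rw [hdx1]; positivity), Real.log_mul (ne_of_gt hc)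
      (Real.exp_ne_zero _), Real.log_exp, hdx1, Real.log_div (ne_of_gt hxd) hxne, hh]
    ring
  intro r
  rcases le_or_gt (1 - r) 0 with hs | hs
  · have : {x ∈ Ioi (0:ℝ) |
        (fun x => 1 - c * Real.exp (-(a / x + b * x)) / (d / x + 1)) x ≤ r} = Ioi (0:ℝ) := by
      ext x
      simp only [Set.mem_setOf_eq, mem_sep_iff, mem_Ioi, and_iff_left_iff_imp]
      intro hx
      have hx0 : (0:ℝ) < x := hx
      have hpos : (0:ℝ) < c * Real.exp (-(a / x + b * x)) / (d / x + 1) := by positivity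
      linarith
    rw [this]; exact convex_Ioi 0
  · have hset : {x ∈ Ioi (0:ℝ) |
        (fun x => 1 - c * Real.exp (-(a / x + b * x)) / (d / x + 1)) x ≤ r}
        = {x ∈ Ioi (0:ℝ) | Real.log (1 - r) ≤ h x} := by
      ext x
      simp only [Set.mem_setOf_eq, mem_sep_iff, mem_Ioi, and_congr_right_iff]
      intro hx
      rw [Real.log_le_iff_le_exp hs, ← hkey x hx]
      constructor <;> intro hle <;> linarith
    rw [hset]
    exact hcon.convex_ge _
end
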